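/- Let x = (B₁,B₂,i,j) and x' = (B₁',B₂',i',j') be ADHM data for (V,W) and (V',W') such that B₁ and B₁' have no common eigenvalue, and let T(x,x') = (B̃₁, B̃₂, ĩ, j̃) be the tensor product ADHM datum on (Ṽ, W̃) = (V⊗W' ⊕ W⊗V', W⊗W') defined by B̃₁ = diag(B₁⊗Id, Id⊗B₁'), B̃₂ = [[B₂⊗Id, X],[Y, Id⊗B₂']], ĩ = (i⊗Id, Id⊗i')ᵗ, j̃ = (j⊗Id, Id⊗j'), where X, Y are the unique solutions of (B₁⊗Id)X − X(Id⊗B₁') + i⊗j' = 0 and (Id⊗B₁')Y − Y(B₁⊗Id) + j⊗i' = 0. If x and x' are both stable, then T(x,x') is stable; if x and x' are both costable, then T(x,x') is costable. -/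

import Mathlib

open TensorProduct

/-- stability: every `B₁,B₂`-invariant subspace containing `Im i` is `⊤`. -/
def IsStableADHM {V W : Type*} [AddCommGroup V] [Module ℂ V] [AddCommGroup W] [Module ℂ W]
    (B₁ B₂ : V →ₗ[ℂ] V) (i : W →ₗ[ℂ] V) : Prop :=
  ∀ S : Submodule ℂ V, LinearMap.range i ≤ S → S.map B₁ ≤ S → S.map B₂ ≤ S → S = ⊤

/-- costability: every `B₁,B₂`-invariant subspace inside `Ker j` is `⊥`. -/
def IsCostableADHM {V W : Type*} [AddCommGroup V] [Module ℂ V] [AddCommGroup W] [Module ℂ W]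
    (B₁ B₂ : V →ₗ[ℂ] V) (j : V →ₗ[ℂ] W) : Prop :=
  ∀ S : Submodule ℂ V, S ≤ LinearMap.ker j → S.map B₁ ≤ S → S.map B₂ ≤ S → S = ⊥

open Polynomial LinearMap

set_option linter.unusedSectionVars false
set_option linter.unusedVariables false
set_option linter.unnecessarySimpa false

section Aux
variable {M N : Type*} [AddCommGroup M] [Module ℂ M] [AddCommGroup N] [Module ℂ N]

lemma pow_mem_inv (f : M →ₗ[ℂ] M) (S : Submodule ℂ M) (h : S.map f ≤ S) :
    ∀ (n : ℕ) (x : M), x ∈ S → (f ^ n) x ∈ S := by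
  intro n
  induction n with
  | zero => intro x hx; simpa using hx
  | succ n ih =>
    intro x hx
    rw [pow_succ, Module.End.mul_apply]
    exact ih _ (h ⟨x, hx, rfl⟩)

lemma aeval_mem_inv (f : M →ₗ[ℂ] M) (S : Submodule ℂ M) (h : S.map f ≤ S)
    (p : ℂ[X]) : ∀ x ∈ S, aeval f p x ∈ S := by
  induction p using Polynomial.induction_on' with
  | add p q hp hq =>
    intro x hx
    rw [map_add, LinearMap.add_apply]
    exact S.add_mem (hp x hx) (hq x hx)
  | monomial n c =>
    intro x hx
    rw [aeval_monomial, Module.End.mul_apply, Module.algebraMap_end_apply]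
    exact S.smul_mem _ (pow_mem_inv f S h n x hx)

/-- `f ↦ f ⊗ id` as an algebra morphism. -/
noncomputable def rTensorAlg (N : Type*) [AddCommGroup N] [Module ℂ N] :
    (M →ₗ[ℂ] M) →ₐ[ℂ] (M ⊗[ℂ] N →ₗ[ℂ] M ⊗[ℂ] N) where
  toFun f := f.rTensor N
  map_one' := rTensor_id N M
  map_mul' f g := rTensor_comp N f g
  map_zero' := rTensor_zero N
  map_add' f g := rTensor_add N f g
  commutes' c := by
    rw [Module.algebraMap_end_eq_smul_id, Module.algebraMap_end_eq_smul_id,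
      rTensor_smul, rTensor_id]

/-- `f ↦ id ⊗ f` as an algebra morphism. -/
noncomputable def lTensorAlg (N : Type*) [AddCommGroup N] [Module ℂ N] :
    (M →ₗ[ℂ] M) →ₐ[ℂ] (N ⊗[ℂ] M →ₗ[ℂ] N ⊗[ℂ] M) where
  toFun f := f.lTensor N
  map_one' := lTensor_id N M
  map_mul' f g := lTensor_comp N f g
  map_zero' := lTensor_zero N
  map_add' f g := lTensor_add N f g
  commutes' c := by
    rw [Module.algebraMap_end_eq_smul_id, Module.algebraMap_end_eq_smul_id,
      lTensor_smul, lTensor_id]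

/-- `(f,g) ↦ f × g` as an algebra morphism. -/
noncomputable def prodMapAlg :
    ((M →ₗ[ℂ] M) × (N →ₗ[ℂ] N)) →ₐ[ℂ] (M × N →ₗ[ℂ] M × N) where
  toFun p := p.1.prodMap p.2
  map_one' := by ext x <;> rfl
  map_mul' f g := by ext x <;> rfl
  map_zero' := by ext x <;> rfl
  map_add' f g := by ext x <;> rfl
  commutes' c := by ext x <;> rfl

lemma aeval_rTensor (f : M →ₗ[ℂ] M) (p : ℂ[X]) :
    aeval (f.rTensor N) p = (aeval f p).rTensor N := by
  have := aeval_algHom_apply (rTensorAlg (M := M) N) f p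
  simpa [rTensorAlg] using this

lemma aeval_lTensor (f : M →ₗ[ℂ] M) (p : ℂ[X]) :
    aeval (f.lTensor N) p = (aeval f p).lTensor N := by
  have := aeval_algHom_apply (lTensorAlg (M := M) N) f p
  simpa [lTensorAlg] using this

lemma aeval_prodMap (f : M →ₗ[ℂ] M) (g : N →ₗ[ℂ] N) (p : ℂ[X]) :
    aeval (f.prodMap g) p = (aeval f p).prodMap (aeval g p) := by
  have h1 := aeval_algHom_apply (prodMapAlg (M := M) (N := N)) (f, g) p
  have hfst := aeval_algHom_apply (AlgHom.fst ℂ (M →ₗ[ℂ] M) (N →ₗ[ℂ] N)) (f, g) p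
  have hsnd := aeval_algHom_apply (AlgHom.snd ℂ (M →ₗ[ℂ] M) (N →ₗ[ℂ] N)) (f, g) p
  simp only [prodMapAlg, AlgHom.coe_mk, RingHom.coe_mk, MonoidHom.coe_mk, OneHom.coe_mk] at h1
  rw [h1]
  have e1 : ((aeval (f, g)) p).1 = aeval f p := by simpa using hfst.symm
  have e2 : ((aeval (f, g)) p).2 = aeval g p := by simpa using hsnd.symm
  rw [show (aeval (f, g)) p = (aeval f p, aeval g p) from Prod.ext e1 e2]

end Aux

section Aux2
variable {V V' : Type*} [AddCommGroup V] [Module ℂ V] [FiniteDimensional ℂ V]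
  [AddCommGroup V'] [Module ℂ V'] [FiniteDimensional ℂ V']

lemma aeval_multiset_prod_injective (B : V' →ₗ[ℂ] V') (s : Multiset ℂ[X])
    (h : ∀ p ∈ s, Function.Injective (aeval B p)) :
    Function.Injective (aeval B s.prod) := by
  induction s using Multiset.induction_on with
  | empty => simp only [Multiset.prod_zero, map_one]; exact fun a b hab => hab
  | cons a s ih =>
    rw [Multiset.prod_cons, map_mul]
    have ha := h a (Multiset.mem_cons_self a s)
    have hs := ih (fun p hp => h p (Multiset.mem_cons_of_mem hp))
    intro x y hxy
    rw [Module.End.mul_apply, Module.End.mul_apply] at hxy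
    exact hs (ha hxy)

lemma aeval_minpoly_injective (B₁ : V →ₗ[ℂ] V) (B₁' : V' →ₗ[ℂ] V')
    (hdisj : ∀ c : ℂ, ¬(Module.End.HasEigenvalue B₁ c ∧ Module.End.HasEigenvalue B₁' c)) :
    Function.Injective (aeval B₁' (minpoly ℂ B₁)) := by
  have hint : IsIntegral ℂ B₁ := LinearMap.isIntegral B₁
  have hmo : (minpoly ℂ B₁).Monic := minpoly.monic hint
  have hsp : (minpoly ℂ B₁).Splits := IsAlgClosed.splits _
  have hfact := hsp.eq_prod_roots_of_monic hmo
  rw [hfact]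
  apply aeval_multiset_prod_injective
  intro p hp
  simp only [Multiset.mem_map] at hp
  obtain ⟨μ, hμ, rfl⟩ := hp
  have hroot : (minpoly ℂ B₁).IsRoot μ := isRoot_of_mem_roots hμ
  have hev : Module.End.HasEigenvalue B₁ μ := Module.End.hasEigenvalue_of_isRoot hroot
  have hnev : ¬ Module.End.HasEigenvalue B₁' μ := fun h => hdisj μ ⟨hev, h⟩
  rw [Module.End.hasEigenvalue_iff, Module.End.eigenspace_def, not_not] at hnev
  have : aeval B₁' (X - C μ) = B₁' - μ • (1 : V' →ₗ[ℂ] V') := by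
    rw [map_sub, aeval_X, aeval_C, Module.algebraMap_end_eq_smul_id]
    rfl
  rw [this, ← LinearMap.ker_eq_bot]
  exact hnev

end Aux2

section Aux3
variable {V W' : Type*} [AddCommGroup V] [Module ℂ V]
  [AddCommGroup W'] [Module ℂ W']

lemma eq_zero_of_dual_apply (s : V ⊗[ℂ] W')
    (h : ∀ φ : W' →ₗ[ℂ] ℂ, TensorProduct.rid ℂ V (φ.lTensor V s) = 0) : s = 0 := by
  classical
  let c := Module.Basis.ofVectorSpace ℂ W'
  let e : V ⊗[ℂ] W' ≃ₗ[ℂ] V ⊗[ℂ] (Module.Basis.ofVectorSpaceIndex ℂ W' →₀ ℂ) :=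
    LinearEquiv.lTensor V c.repr
  suffices h2 : e s = 0 by
    have := congrArg e.symm h2
    simpa using this
  apply (TensorProduct.finsuppScalarRight ℂ ℂ V (Module.Basis.ofVectorSpaceIndex ℂ W')).injective
  rw [map_zero]
  ext k
  rw [TensorProduct.finsuppScalarRight_apply]
  have he : e s = (c.repr.toLinearMap).lTensor V s := rfl
  rw [he, ← LinearMap.comp_apply, ← lTensor_comp]
  exact h ((Finsupp.lapply k) ∘ₗ c.repr.toLinearMap)

end Aux3

section Split
variable {V W V' W' : Type*}
    [AddCommGroup V] [Module ℂ V] [FiniteDimensional ℂ V]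
    [AddCommGroup W] [Module ℂ W] [FiniteDimensional ℂ W]
    [AddCommGroup V'] [Module ℂ V'] [FiniteDimensional ℂ V']
    [AddCommGroup W'] [Module ℂ W'] [FiniteDimensional ℂ W']

lemma split_snd (B₁ : V →ₗ[ℂ] V) (B₁' : V' →ₗ[ℂ] V')
    (hdisj : ∀ c : ℂ, ¬(Module.End.HasEigenvalue B₁ c ∧ Module.End.HasEigenvalue B₁' c))
    (K : Submodule ℂ ((V ⊗[ℂ] W') × (W ⊗[ℂ] V')))
    (hK : K.map ((TensorProduct.map B₁ LinearMap.id).prodMap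
        (TensorProduct.map LinearMap.id B₁')) ≤ K) :
    ∀ a b, (a, b) ∈ K → ((0 : V ⊗[ℂ] W'), b) ∈ K := by
  intro a b hab
  set χ := minpoly ℂ B₁ with hχ
  -- K₂ = slice of K over 0 in the first component
  let K₂ : Submodule ℂ (W ⊗[ℂ] V') :=
    { carrier := {y | ((0 : V ⊗[ℂ] W'), y) ∈ K}
      add_mem' := fun {y₁ y₂} h1 h2 => by
        have := K.add_mem h1 h2
        simpa using this
      zero_mem' := K.zero_mem
      smul_mem' := fun c y hy => by
        have := K.smul_mem c hy
        simpa [Prod.smul_mk] using this }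
  have hmem : ∀ y, y ∈ K₂ ↔ ((0 : V ⊗[ℂ] W'), y) ∈ K := fun y => Iff.rfl
  -- K₂ is invariant under id ⊗ B₁'
  have hK₂inv : K₂.map (TensorProduct.map LinearMap.id B₁') ≤ K₂ := by
    rintro _ ⟨y, hy, rfl⟩
    rw [hmem]
    have : ((TensorProduct.map B₁ LinearMap.id).prodMap
        (TensorProduct.map LinearMap.id B₁')) ((0 : V ⊗[ℂ] W'), y) ∈ K :=
      hK ⟨_, hy, rfl⟩
    simpa using this
  -- the evaluation of χ at the big operator
  have hg : aeval ((TensorProduct.map B₁ LinearMap.id).prodMap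
      (TensorProduct.map LinearMap.id B₁')) χ (a, b) ∈ K :=
    aeval_mem_inv _ K hK χ _ hab
  have hcompute : aeval ((TensorProduct.map B₁ LinearMap.id).prodMap
      (TensorProduct.map LinearMap.id B₁')) χ (a, b)
      = ((0 : V ⊗[ℂ] W'), (aeval B₁' χ).lTensor W b) := by
    rw [aeval_prodMap]
    have h1 : aeval (TensorProduct.map B₁ (LinearMap.id : W' →ₗ[ℂ] W')) χ
        = (0 : V ⊗[ℂ] W' →ₗ[ℂ] V ⊗[ℂ] W') := by
      have : TensorProduct.map B₁ (LinearMap.id : W' →ₗ[ℂ] W') = B₁.rTensor W' := rfl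
      rw [this, aeval_rTensor, hχ, minpoly.aeval, rTensor_zero]
    have h2 : aeval (TensorProduct.map (LinearMap.id : W →ₗ[ℂ] W) B₁') χ
        = (aeval B₁' χ).lTensor W := by
      have : TensorProduct.map (LinearMap.id : W →ₗ[ℂ] W) B₁' = B₁'.lTensor W := rfl
      rw [this, aeval_lTensor]
    rw [h1, h2]
    simp
  rw [hcompute] at hg
  -- so u' b ∈ K₂ where u' = lTensor of an injective map
  have hub : (aeval B₁' χ).lTensor W b ∈ K₂ := hg
  have hinj : Function.Injective (aeval B₁' χ) := aeval_minpoly_injective B₁ B₁' hdisj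
  have hinj' : Function.Injective ((aeval B₁' χ).lTensor W) :=
    Module.Flat.lTensor_preserves_injective_linearMap _ hinj
  -- K₂ is invariant under u'
  have hK₂u : K₂.map ((aeval B₁' χ).lTensor W) ≤ K₂ := by
    rintro _ ⟨y, hy, rfl⟩
    have : TensorProduct.map (LinearMap.id : W →ₗ[ℂ] W) B₁' = B₁'.lTensor W := rfl
    rw [this] at hK₂inv
    have := aeval_mem_inv (B₁'.lTensor W) K₂ hK₂inv χ y hy
    rwa [aeval_lTensor] at this
  -- injective endomorphism of invariant subspace is surjective on it
  have hsurj : Function.Surjective ((aeval B₁' χ).lTensor W) :=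
    (LinearMap.injective_iff_surjective).mp hinj'
  let e : (W ⊗[ℂ] V') ≃ₗ[ℂ] (W ⊗[ℂ] V') :=
    LinearEquiv.ofBijective ((aeval B₁' χ).lTensor W) ⟨hinj', hsurj⟩
  have hmap_eq : K₂.map ((aeval B₁' χ).lTensor W) = K₂ := by
    apply Submodule.eq_of_le_of_finrank_le hK₂u
    have : K₂.map ((aeval B₁' χ).lTensor W) = K₂.map (e : (W ⊗[ℂ] V') →ₗ[ℂ] (W ⊗[ℂ] V')) := rfl
    rw [this, LinearEquiv.finrank_map_eq]
  rw [← hmap_eq] at hub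
  obtain ⟨y, hy, hyb⟩ := hub
  have : y = b := hinj' hyb
  rw [this] at hy
  exact hy

end Split

section Gen
variable {V W W' : Type*} [AddCommGroup V] [Module ℂ V] [AddCommGroup W] [Module ℂ W]
  [AddCommGroup W'] [Module ℂ W']

/-- a `B₁⊗1, B₂⊗1`-invariant subspace of `V ⊗ W'` containing the image of `i⊗1` is everything,
when `(B₁,B₂,i)` is stable. -/
lemma gen_left (B₁ B₂ : V →ₗ[ℂ] V) (i : W →ₗ[ℂ] V) (hs : IsStableADHM B₁ B₂ i)
    (S : Submodule ℂ (V ⊗[ℂ] W'))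
    (hi : LinearMap.range (TensorProduct.map i (LinearMap.id : W' →ₗ[ℂ] W')) ≤ S)
    (h1 : S.map (TensorProduct.map B₁ LinearMap.id) ≤ S)
    (h2 : S.map (TensorProduct.map B₂ LinearMap.id) ≤ S) : S = ⊤ := by
  rw [Submodule.eq_top_iff']
  intro x
  induction x using TensorProduct.induction_on with
  | zero => exact S.zero_mem
  | add x y hx hy => exact S.add_mem hx hy
  | tmul v w' =>
    let T : Submodule ℂ V :=
      { carrier := {v | v ⊗ₜ[ℂ] w' ∈ S}
        add_mem' := fun {v₁ v₂} hv1 hv2 => by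
          have := S.add_mem hv1 hv2
          simpa [add_tmul] using this
        zero_mem' := by
          have := S.zero_mem
          simpa [zero_tmul] using this
        smul_mem' := fun c v hv => by
          have := S.smul_mem c hv
          simpa [smul_tmul'] using this }
    have hT : T = ⊤ := by
      apply hs
      · rintro _ ⟨w, rfl⟩
        show i w ⊗ₜ[ℂ] w' ∈ S
        have : TensorProduct.map i (LinearMap.id : W' →ₗ[ℂ] W') (w ⊗ₜ[ℂ] w')
            = i w ⊗ₜ[ℂ] w' := by simp
        rw [← this]
        exact hi ⟨w ⊗ₜ[ℂ] w', rfl⟩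
      · rintro _ ⟨v, hv, rfl⟩
        show B₁ v ⊗ₜ[ℂ] w' ∈ S
        have : TensorProduct.map B₁ (LinearMap.id : W' →ₗ[ℂ] W') (v ⊗ₜ[ℂ] w')
            = B₁ v ⊗ₜ[ℂ] w' := by simp
        rw [← this]
        exact h1 ⟨v ⊗ₜ[ℂ] w', hv, rfl⟩
      · rintro _ ⟨v, hv, rfl⟩
        show B₂ v ⊗ₜ[ℂ] w' ∈ S
        have : TensorProduct.map B₂ (LinearMap.id : W' →ₗ[ℂ] W') (v ⊗ₜ[ℂ] w')
            = B₂ v ⊗ₜ[ℂ] w' := by simp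
        rw [← this]
        exact h2 ⟨v ⊗ₜ[ℂ] w', hv, rfl⟩
    have : v ∈ T := hT ▸ Submodule.mem_top
    exact this

/-- mirror image of `gen_left` for subspaces of `W ⊗ V'`. -/
lemma gen_right (B₁ B₂ : V →ₗ[ℂ] V) (i : W' →ₗ[ℂ] V) (hs : IsStableADHM B₁ B₂ i)
    (S : Submodule ℂ (W ⊗[ℂ] V))
    (hi : LinearMap.range (TensorProduct.map (LinearMap.id : W →ₗ[ℂ] W) i) ≤ S)
    (h1 : S.map (TensorProduct.map LinearMap.id B₁) ≤ S)
    (h2 : S.map (TensorProduct.map LinearMap.id B₂) ≤ S) : S = ⊤ := by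
  rw [Submodule.eq_top_iff']
  intro x
  induction x using TensorProduct.induction_on with
  | zero => exact S.zero_mem
  | add x y hx hy => exact S.add_mem hx hy
  | tmul w v =>
    let T : Submodule ℂ V :=
      { carrier := {v | w ⊗ₜ[ℂ] v ∈ S}
        add_mem' := fun {v₁ v₂} hv1 hv2 => by
          have := S.add_mem hv1 hv2
          simpa [tmul_add] using this
        zero_mem' := by
          have := S.zero_mem
          simpa [tmul_zero] using this
        smul_mem' := fun c v hv => by
          have := S.smul_mem c hv
          simpa [tmul_smul] using this }
    have hT : T = ⊤ := by
      apply hs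
      · rintro _ ⟨w', rfl⟩
        show w ⊗ₜ[ℂ] i w' ∈ S
        have : TensorProduct.map (LinearMap.id : W →ₗ[ℂ] W) i (w ⊗ₜ[ℂ] w')
            = w ⊗ₜ[ℂ] i w' := by simp
        rw [← this]
        exact hi ⟨w ⊗ₜ[ℂ] w', rfl⟩
      · rintro _ ⟨v, hv, rfl⟩
        show w ⊗ₜ[ℂ] B₁ v ∈ S
        have : TensorProduct.map (LinearMap.id : W →ₗ[ℂ] W) B₁ (w ⊗ₜ[ℂ] v)
            = w ⊗ₜ[ℂ] B₁ v := by simp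
        rw [← this]
        exact h1 ⟨w ⊗ₜ[ℂ] v, hv, rfl⟩
      · rintro _ ⟨v, hv, rfl⟩
        show w ⊗ₜ[ℂ] B₂ v ∈ S
        have : TensorProduct.map (LinearMap.id : W →ₗ[ℂ] W) B₂ (w ⊗ₜ[ℂ] v)
            = w ⊗ₜ[ℂ] B₂ v := by simp
        rw [← this]
        exact h2 ⟨w ⊗ₜ[ℂ] v, hv, rfl⟩
    have : v ∈ T := hT ▸ Submodule.mem_top
    exact this

end Gen

lemma eq_zero_of_dual_apply_left {V' W : Type*} [AddCommGroup V'] [Module ℂ V']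
    [AddCommGroup W] [Module ℂ W] (s : W ⊗[ℂ] V')
    (h : ∀ φ : W →ₗ[ℂ] ℂ, TensorProduct.lid ℂ V' (φ.rTensor V' s) = 0) : s = 0 := by
  have hc : (TensorProduct.comm ℂ W V') s = 0 := by
    apply eq_zero_of_dual_apply
    intro φ
    have key : (TensorProduct.rid ℂ V').toLinearMap ∘ₗ (φ.lTensor V') ∘ₗ
        (TensorProduct.comm ℂ W V').toLinearMap
        = (TensorProduct.lid ℂ V').toLinearMap ∘ₗ (φ.rTensor V') := by
      apply TensorProduct.ext'
      intro w v'
      simp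
    have := congrArg (fun f => f s) key
    simp only [LinearMap.comp_apply, LinearEquiv.coe_coe] at this
    rw [this]
    exact h φ
  simpa using congrArg (TensorProduct.comm ℂ W V').symm hc

section Costab
variable {V W W' : Type*} [AddCommGroup V] [Module ℂ V] [AddCommGroup W] [Module ℂ W]
  [AddCommGroup W'] [Module ℂ W']

lemma costab_left (B₁ B₂ : V →ₗ[ℂ] V) (j : V →ₗ[ℂ] W) (hc : IsCostableADHM B₁ B₂ j)
    (S : Submodule ℂ (V ⊗[ℂ] W'))
    (hj : S ≤ LinearMap.ker (TensorProduct.map j (LinearMap.id : W' →ₗ[ℂ] W')))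
    (h1 : S.map (TensorProduct.map B₁ LinearMap.id) ≤ S)
    (h2 : S.map (TensorProduct.map B₂ LinearMap.id) ≤ S) : S = ⊥ := by
  rw [Submodule.eq_bot_iff]
  intro s hs
  apply eq_zero_of_dual_apply
  intro φ
  set F : V ⊗[ℂ] W' →ₗ[ℂ] V := (TensorProduct.rid ℂ V).toLinearMap ∘ₗ φ.lTensor V with hF
  have hcomm : ∀ (Bc : V →ₗ[ℂ] V), Bc ∘ₗ F = F ∘ₗ (TensorProduct.map Bc LinearMap.id) := by
    intro Bc
    apply TensorProduct.ext'
    intro v w'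
    simp [hF]
  have hSF : (S.map F) = ⊥ := by
    apply hc
    · rintro _ ⟨x, hx, rfl⟩
      have key : j ∘ₗ F = ((TensorProduct.rid ℂ W).toLinearMap ∘ₗ φ.lTensor W) ∘ₗ
          (TensorProduct.map j (LinearMap.id : W' →ₗ[ℂ] W')) := by
        apply TensorProduct.ext'
        intro v w'
        simp [hF]
      have hx0 : TensorProduct.map j (LinearMap.id : W' →ₗ[ℂ] W') x = 0 := hj hx
      have := congrArg (fun f => f x) key
      simp only [LinearMap.comp_apply] at this
      rw [LinearMap.mem_ker, this, hx0, map_zero, map_zero]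
    · rintro _ ⟨_, ⟨x, hx, rfl⟩, rfl⟩
      have := congrArg (fun f => f x) (hcomm B₁)
      simp only [LinearMap.comp_apply] at this
      rw [this]
      exact ⟨_, h1 ⟨x, hx, rfl⟩, rfl⟩
    · rintro _ ⟨_, ⟨x, hx, rfl⟩, rfl⟩
      have := congrArg (fun f => f x) (hcomm B₂)
      simp only [LinearMap.comp_apply] at this
      rw [this]
      exact ⟨_, h2 ⟨x, hx, rfl⟩, rfl⟩
  have : F s ∈ S.map F := ⟨s, hs, rfl⟩
  rw [hSF] at this
  simpa [hF] using this

lemma costab_right (B₁ B₂ : V →ₗ[ℂ] V) (j : V →ₗ[ℂ] W') (hc : IsCostableADHM B₁ B₂ j)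
    (S : Submodule ℂ (W ⊗[ℂ] V))
    (hj : S ≤ LinearMap.ker (TensorProduct.map (LinearMap.id : W →ₗ[ℂ] W) j))
    (h1 : S.map (TensorProduct.map LinearMap.id B₁) ≤ S)
    (h2 : S.map (TensorProduct.map LinearMap.id B₂) ≤ S) : S = ⊥ := by
  rw [Submodule.eq_bot_iff]
  intro s hs
  apply eq_zero_of_dual_apply_left
  intro φ
  set F : W ⊗[ℂ] V →ₗ[ℂ] V := (TensorProduct.lid ℂ V).toLinearMap ∘ₗ φ.rTensor V with hF
  have hcomm : ∀ (Bc : V →ₗ[ℂ] V), Bc ∘ₗ F = F ∘ₗ (TensorProduct.map LinearMap.id Bc) := by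
    intro Bc
    apply TensorProduct.ext'
    intro w v
    simp [hF]
  have hSF : (S.map F) = ⊥ := by
    apply hc
    · rintro _ ⟨x, hx, rfl⟩
      have key : j ∘ₗ F = ((TensorProduct.lid ℂ W').toLinearMap ∘ₗ φ.rTensor W') ∘ₗ
          (TensorProduct.map (LinearMap.id : W →ₗ[ℂ] W) j) := by
        apply TensorProduct.ext'
        intro w v
        simp [hF]
      have hx0 : TensorProduct.map (LinearMap.id : W →ₗ[ℂ] W) j x = 0 := hj hx
      have := congrArg (fun f => f x) key
      simp only [LinearMap.comp_apply] at this
      rw [LinearMap.mem_ker, this, hx0, map_zero, map_zero]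
    · rintro _ ⟨_, ⟨x, hx, rfl⟩, rfl⟩
      have := congrArg (fun f => f x) (hcomm B₁)
      simp only [LinearMap.comp_apply] at this
      rw [this]
      exact ⟨_, h1 ⟨x, hx, rfl⟩, rfl⟩
    · rintro _ ⟨_, ⟨x, hx, rfl⟩, rfl⟩
      have := congrArg (fun f => f x) (hcomm B₂)
      simp only [LinearMap.comp_apply] at this
      rw [this]
      exact ⟨_, h2 ⟨x, hx, rfl⟩, rfl⟩
  have : F s ∈ S.map F := ⟨s, hs, rfl⟩
  rw [hSF] at this
  simpa [hF] using this

end Costab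

/-- the tensor product ADHM datum `T(x,x') = (B̃₁,B̃₂,ĩ,j̃)` on
`(Ṽ,W̃) = (V⊗W' ⊕ W⊗V', W⊗W')` of two ADHM data whose first components have no common
eigenvalue is stable whenever `x,x'` are stable and costable whenever `x,x'` are costable. -/
theorem stmt13
    (V W V' W' : Type*)
    [AddCommGroup V] [Module ℂ V] [FiniteDimensional ℂ V]
    [AddCommGroup W] [Module ℂ W] [FiniteDimensional ℂ W]
    [AddCommGroup V'] [Module ℂ V'] [FiniteDimensional ℂ V']
    [AddCommGroup W'] [Module ℂ W'] [FiniteDimensional ℂ W']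
    (B₁ B₂ : V →ₗ[ℂ] V) (i : W →ₗ[ℂ] V) (j : V →ₗ[ℂ] W)
    (B₁' B₂' : V' →ₗ[ℂ] V') (i' : W' →ₗ[ℂ] V') (j' : V' →ₗ[ℂ] W')
    (hdisj : ∀ c : ℂ, ¬(Module.End.HasEigenvalue B₁ c ∧ Module.End.HasEigenvalue B₁' c))
    (Xs : W ⊗[ℂ] V' →ₗ[ℂ] V ⊗[ℂ] W') (Ys : V ⊗[ℂ] W' →ₗ[ℂ] W ⊗[ℂ] V')
    (hX : (TensorProduct.map B₁ LinearMap.id) ∘ₗ Xs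
        - Xs ∘ₗ (TensorProduct.map LinearMap.id B₁') + TensorProduct.map i j' = 0)
    (hY : (TensorProduct.map LinearMap.id B₁') ∘ₗ Ys
        - Ys ∘ₗ (TensorProduct.map B₁ LinearMap.id) + TensorProduct.map j i' = 0) :
    (IsStableADHM B₁ B₂ i → IsStableADHM B₁' B₂' i' →
      IsStableADHM
        ((TensorProduct.map B₁ LinearMap.id).prodMap (TensorProduct.map LinearMap.id B₁'))
        (LinearMap.prod
          ((TensorProduct.map B₂ LinearMap.id) ∘ₗ (LinearMap.fst ℂ _ _)
            + Xs ∘ₗ (LinearMap.snd ℂ _ _))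
          (Ys ∘ₗ (LinearMap.fst ℂ _ _)
            + (TensorProduct.map LinearMap.id B₂') ∘ₗ (LinearMap.snd ℂ _ _)))
        (LinearMap.prod (TensorProduct.map i LinearMap.id) (TensorProduct.map LinearMap.id i'))) ∧
    (IsCostableADHM B₁ B₂ j → IsCostableADHM B₁' B₂' j' →
      IsCostableADHM
        ((TensorProduct.map B₁ LinearMap.id).prodMap (TensorProduct.map LinearMap.id B₁'))
        (LinearMap.prod
          ((TensorProduct.map B₂ LinearMap.id) ∘ₗ (LinearMap.fst ℂ _ _)
            + Xs ∘ₗ (LinearMap.snd ℂ _ _))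
          (Ys ∘ₗ (LinearMap.fst ℂ _ _)
            + (TensorProduct.map LinearMap.id B₂') ∘ₗ (LinearMap.snd ℂ _ _)))
        (LinearMap.coprod (TensorProduct.map j LinearMap.id) (TensorProduct.map LinearMap.id j'))) := by
  have splitK : ∀ (K : Submodule ℂ ((V ⊗[ℂ] W') × (W ⊗[ℂ] V'))),
      K.map ((TensorProduct.map B₁ LinearMap.id).prodMap
        (TensorProduct.map LinearMap.id B₁')) ≤ K →
      ∀ a b, (a, b) ∈ K → ((0 : V ⊗[ℂ] W'), b) ∈ K ∧ (a, (0 : W ⊗[ℂ] V')) ∈ K := by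
    intro K hK a b hab
    have h2 := split_snd B₁ B₁' hdisj K hK a b hab
    refine ⟨h2, ?_⟩
    have := K.sub_mem hab h2
    simpa using this
  constructor
  · -- stability
    intro hs hs' K hrange hK1 hK2
    set SA : Submodule ℂ (V ⊗[ℂ] W') := K.comap (LinearMap.inl ℂ _ _) with hSA
    set SB : Submodule ℂ (W ⊗[ℂ] V') := K.comap (LinearMap.inr ℂ _ _) with hSB
    have hSAmem : ∀ a, a ∈ SA ↔ (a, (0 : W ⊗[ℂ] V')) ∈ K := fun a => Iff.rfl
    have hSBmem : ∀ b, b ∈ SB ↔ ((0 : V ⊗[ℂ] W'), b) ∈ K := fun b => Iff.rfl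
    have hSAtop : SA = ⊤ := by
      apply gen_left B₁ B₂ i hs
      · rintro _ ⟨w, rfl⟩
        rw [hSAmem]
        have hmem : (TensorProduct.map i LinearMap.id w,
            TensorProduct.map LinearMap.id i' w) ∈ K := hrange ⟨w, rfl⟩
        exact (splitK K hK1 _ _ hmem).2
      · rintro _ ⟨a, ha, rfl⟩
        rw [hSAmem]
        have hmem := hK1 ⟨(a, (0 : W ⊗[ℂ] V')), ha, rfl⟩
        simpa using hmem
      · rintro _ ⟨a, ha, rfl⟩
        rw [hSAmem]
        have hmem := hK2 ⟨(a, (0 : W ⊗[ℂ] V')), ha, rfl⟩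
        have hmem' : (TensorProduct.map B₂ LinearMap.id a, Ys a) ∈ K := by
          simpa using hmem
        exact (splitK K hK1 _ _ hmem').2
    have hSBtop : SB = ⊤ := by
      apply gen_right B₁' B₂' i' hs'
      · rintro _ ⟨w, rfl⟩
        rw [hSBmem]
        have hmem : (TensorProduct.map i LinearMap.id w,
            TensorProduct.map LinearMap.id i' w) ∈ K := hrange ⟨w, rfl⟩
        exact (splitK K hK1 _ _ hmem).1
      · rintro _ ⟨b, hb, rfl⟩
        rw [hSBmem]
        have hmem := hK1 ⟨((0 : V ⊗[ℂ] W'), b), hb, rfl⟩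
        simpa using hmem
      · rintro _ ⟨b, hb, rfl⟩
        rw [hSBmem]
        have hmem := hK2 ⟨((0 : V ⊗[ℂ] W'), b), hb, rfl⟩
        have hmem' : (Xs b, TensorProduct.map LinearMap.id B₂' b) ∈ K := by
          simpa using hmem
        exact (splitK K hK1 _ _ hmem').1
    rw [Submodule.eq_top_iff']
    rintro ⟨a, b⟩
    have ha : (a, (0 : W ⊗[ℂ] V')) ∈ K := (hSAmem a).mp (hSAtop ▸ Submodule.mem_top)
    have hb : ((0 : V ⊗[ℂ] W'), b) ∈ K := (hSBmem b).mp (hSBtop ▸ Submodule.mem_top)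
    have := K.add_mem ha hb
    simpa using this
  · -- costability
    intro hc hc' K hker hK1 hK2
    rw [Submodule.eq_bot_iff]
    rintro ⟨a, b⟩ hab
    have hsplit := splitK K hK1 a b hab
    set SA : Submodule ℂ (V ⊗[ℂ] W') := K.comap (LinearMap.inl ℂ _ _) with hSA
    set SB : Submodule ℂ (W ⊗[ℂ] V') := K.comap (LinearMap.inr ℂ _ _) with hSB
    have hSAmem : ∀ a, a ∈ SA ↔ (a, (0 : W ⊗[ℂ] V')) ∈ K := fun a => Iff.rfl
    have hSBmem : ∀ b, b ∈ SB ↔ ((0 : V ⊗[ℂ] W'), b) ∈ K := fun b => Iff.rfl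
    have hSAbot : SA = ⊥ := by
      apply costab_left B₁ B₂ j hc
      · intro a' ha'
        rw [hSAmem] at ha'
        have := hker ha'
        rw [LinearMap.mem_ker] at this ⊢
        simpa using this
      · rintro _ ⟨a', ha', rfl⟩
        have ha'' : (a', (0 : W ⊗[ℂ] V')) ∈ K := ha'
        have hmem := hK1 ⟨(a', (0 : W ⊗[ℂ] V')), ha'', rfl⟩
        have hgoal : ((TensorProduct.map B₁ LinearMap.id) a', (0 : W ⊗[ℂ] V')) ∈ K := by
          simpa using hmem
        exact hgoal
      · rintro _ ⟨a', ha', rfl⟩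
        have ha'' : (a', (0 : W ⊗[ℂ] V')) ∈ K := ha'
        have hmem := hK2 ⟨(a', (0 : W ⊗[ℂ] V')), ha'', rfl⟩
        have hmem' : (TensorProduct.map B₂ LinearMap.id a', Ys a') ∈ K := by
          simpa using hmem
        exact (splitK K hK1 _ _ hmem').2
    have hSBbot : SB = ⊥ := by
      apply costab_right B₁' B₂' j' hc'
      · intro b' hb'
        rw [hSBmem] at hb'
        have := hker hb'
        rw [LinearMap.mem_ker] at this ⊢
        simpa using this
      · rintro _ ⟨b', hb', rfl⟩
        have hb'' : ((0 : V ⊗[ℂ] W'), b') ∈ K := hb'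
        have hmem := hK1 ⟨((0 : V ⊗[ℂ] W'), b'), hb'', rfl⟩
        have hgoal : ((0 : V ⊗[ℂ] W'), (TensorProduct.map LinearMap.id B₁') b') ∈ K := by
          simpa using hmem
        exact hgoal
      · rintro _ ⟨b', hb', rfl⟩
        have hb'' : ((0 : V ⊗[ℂ] W'), b') ∈ K := hb'
        have hmem := hK2 ⟨((0 : V ⊗[ℂ] W'), b'), hb'', rfl⟩
        have hmem' : (Xs b', TensorProduct.map LinearMap.id B₂' b') ∈ K := by
          simpa using hmem
        exact (splitK K hK1 _ _ hmem').1
    have ha0 : a = 0 := by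
      have : a ∈ SA := (hSAmem a).mpr hsplit.2
      rw [hSAbot] at this
      simpa using this
    have hb0 : b = 0 := by
      have : b ∈ SB := (hSBmem b).mpr hsplit.1
      rw [hSBbot] at this
      simpa using this
    rw [ha0, hb0]
    rfl
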